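/- arXiv:1408.3774 — 3 statements merged into one kernel-verified Lean document; each statement's English description precedes it below -/
import Mathlib

section
/- For fixed S > 0, z ≥ 0 and y ∈ ℝ, the set Γ(S,z,y) = {β ∈ ℝ : h(S,z,y,β) ≥ 0}, where h(S,z,y,β) = z + g(y,S) − g(y+β,S) − g(β,S) for β ≠ 0 and h(S,z,y,0) = z − δ, is a compact subset of ℝ. -/
/-- Transaction cost function `g(β,S) = max(δ, μ|β|S)·1_{β≠0}`. -/
noncomputable def tcost (δ μ : ℝ) (β S : ℝ) : ℝ :=
  if β = 0 then 0 else max δ (μ * |β| * S)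

/-- Post-trade portfolio value `h(S,z,y,β)`, defined at `β = 0` by continuity as `z - δ`. -/
noncomputable def postTrade (δ μ : ℝ) (S z y β : ℝ) : ℝ :=
  if β = 0 then z - δ
  else z + tcost δ μ y S - tcost δ μ (y + β) S - tcost δ μ β S

theorem permissible_trades_compact (δ μ S z y : ℝ) (hδ : 0 < δ) (hμ : 0 < μ)
    (hμ1 : μ < 1) (hS : 0 < S) (hz : 0 ≤ z) :
    IsCompact {β : ℝ | 0 ≤ postTrade δ μ S z y β} := by
  set M : ℝ → ℝ := fun t => max δ (μ * |t| * S) with hMdef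
  have htc_le : ∀ t, tcost δ μ t S ≤ M t := by
    intro t
    by_cases h : t = 0
    · simp [tcost, h, hMdef, le_max_iff, hδ.le]
    · simp [tcost, h, hMdef]
  have htc_nonneg : ∀ t, 0 ≤ tcost δ μ t S := by
    intro t
    by_cases h : t = 0
    · simp [tcost, h]
    · simp [tcost, h, le_max_iff, hδ.le]
  have hF_le : ∀ β, z + tcost δ μ y S - M (y + β) - M β ≤ postTrade δ μ S z y β := by
    intro β
    by_cases h0 : β = 0
    · have h1 := htc_le y
      have h2 : M (y + β) = M y := by rw [h0, add_zero]
      have h3 : M β = δ := by simp [h0, hMdef, hδ.le]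
      rw [postTrade, if_pos h0, h2, h3]
      linarith
    · rw [postTrade, if_neg h0]
      have h2 := htc_le (y + β)
      have h3 : tcost δ μ β S = M β := by simp [tcost, h0, hMdef]
      linarith
  have hclosed : IsClosed {β : ℝ | 0 ≤ postTrade δ μ S z y β} := by
    have hFcont : Continuous (fun β : ℝ => z + tcost δ μ y S - M (y + β) - M β) := by
      apply Continuous.sub
      apply Continuous.sub continuous_const
      · exact (continuous_const.max (((continuous_const.mul
          ((continuous_const.add continuous_id).abs)).mul continuous_const)))
      · exact (continuous_const.max ((continuous_const.mul continuous_abs).mul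
          continuous_const))
    have key : {β : ℝ | 0 ≤ postTrade δ μ S z y β} =
        {β : ℝ | 0 ≤ z + tcost δ μ y S - M (y + β) - M β} ∪
        ({β : ℝ | 0 ≤ postTrade δ μ S z y β} ∩ {0, -y}) := by
      ext β
      constructor
      · intro hβ
        by_cases h0 : β = 0
        · exact Or.inr ⟨hβ, Or.inl h0⟩
        by_cases hy : y + β = 0
        · exact Or.inr ⟨hβ, Or.inr (by simp; linarith)⟩
        · left
          have : postTrade δ μ S z y β = z + tcost δ μ y S - M (y + β) - M β := by
            rw [postTrade, if_neg h0]
            have h2 : tcost δ μ (y + β) S = M (y + β) := by simp [tcost, hy, hMdef]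
            have h3 : tcost δ μ β S = M β := by simp [tcost, h0, hMdef]
            rw [h2, h3]
          show (0:ℝ) ≤ _
          rw [← this]; exact hβ
      · rintro (h | ⟨h, _⟩)
        · exact le_trans h (hF_le β)
        · exact h
    rw [key]
    refine (isClosed_le continuous_const hFcont).union ?_
    exact Set.Finite.isClosed (Set.Finite.inter_of_right (by simp) _)
  have hbdd : Bornology.IsBounded {β : ℝ | 0 ≤ postTrade δ μ S z y β} := by
    set R : ℝ := (z + M y) / (μ * S) with hR
    have hμS : 0 < μ * S := mul_pos hμ hS
    have hMy : 0 < M y := lt_of_lt_of_le hδ (le_max_left _ _)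
    have hR0 : 0 ≤ R := div_nonneg (by linarith) hμS.le
    apply (Metric.isBounded_Icc (-R) R).subset
    intro β hβ
    simp only [Set.mem_setOf_eq] at hβ
    rw [Set.mem_Icc, ← abs_le]
    by_cases h0 : β = 0
    · simpa [h0] using hR0
    · rw [postTrade, if_neg h0] at hβ
      have h1 := htc_le y
      have h2 := htc_nonneg (y + β)
      have h3 : μ * |β| * S ≤ tcost δ μ β S := by
        simp [tcost, h0]
      have h4 : μ * |β| * S ≤ z + M y := by linarith
      rw [hR, le_div_iff₀ hμS]
      calc |β| * (μ * S) = μ * |β| * S := by ring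
        _ ≤ z + M y := h4
  exact Metric.isCompact_iff_isClosed_bounded.mpr ⟨hclosed, hbdd⟩
end

section
/- Let S : [0,T] → ℝ₊ be continuous positive, γ : [0,T] → ℝ of bounded variation with Jordan decomposition γ = γ⁺ − γ⁻ (γ⁺, γ⁻ nondecreasing, γ⁺(0)=γ⁻(0)=0, γ(0)=y), and suppose for constants z ≥ 0, 0 < μ < 1, c₀ := z + g(y,s) + |y|s with s = S(0), that for all t: 0 ≤ c₀ − (1+μ)∫_{[0,t]} S dγ − 2μ∫_{[0,t]} S dγ⁻ + (1+μ)γ(t)S(t) and 0 ≤ c₀ − (1−μ)∫_{[0,t]} S dγ − 2μ∫_{[0,t]} S dγ⁺ + (1−μ)γ(t)S(t). Then for all t ∈ [0,T]: |γ(t)S(t)|² ≤ (z + g(y,s) + (2+3μ)|y|s)²/(2μ²) + ((1+μ)²/(2μ²))·(∫_0^t γ dS)², where ∫_0^t γ dS = γ(t)S(t) − ys − ∫_{[0,t]} S dγ (integration by parts). -/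
open MeasureTheory

/-- The Riemann–Stieltjes integral `∫_{[0,t]} S dγ` against a nondecreasing
right-continuous function `γ`, realized as the Lebesgue integral against the
associated Stieltjes measure. -/
noncomputable def stieltjesInt (S : ℝ → ℝ) (γ : StieltjesFunction ℝ) (t : ℝ) : ℝ :=
  ∫ u in Set.Icc (0:ℝ) t, S u ∂γ.measure

set_option maxHeartbeats 1000000 in
/-- Pathwise growth bound for admissible portfolios under proportional-plus-fixed
transaction costs. -/
theorem portfolio_growth_pathwise (T s z δ μ y : ℝ) (hT : 0 ≤ T) (hδ : 0 < δ)
    (hμ : 0 < μ) (hμ1 : μ < 1) (hz : 0 ≤ z)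
    (S : ℝ → ℝ) (hScont : Continuous S) (hSpos : ∀ t, 0 < S t) (hs : S 0 = s)
    (γp γm : StieltjesFunction ℝ) (hγp0 : γp 0 = 0) (hγm0 : γm 0 = 0)
    (γ : ℝ → ℝ) (hγ : ∀ t, γ t = y + γp t - γm t)
    (hadm1 : ∀ t ∈ Set.Icc (0:ℝ) T,
      0 ≤ z + tcost δ μ y s + |y| * s
        - (1 + μ) * (stieltjesInt S γp t - stieltjesInt S γm t)
        - 2 * μ * stieltjesInt S γm t + (1 + μ) * (γ t * S t))
    (hadm2 : ∀ t ∈ Set.Icc (0:ℝ) T,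
      0 ≤ z + tcost δ μ y s + |y| * s
        - (1 - μ) * (stieltjesInt S γp t - stieltjesInt S γm t)
        - 2 * μ * stieltjesInt S γp t + (1 - μ) * (γ t * S t)) :
    ∀ t ∈ Set.Icc (0:ℝ) T,
      (γ t * S t) ^ 2 ≤ (z + tcost δ μ y s + (2 + 3 * μ) * |y| * s) ^ 2 / (2 * μ ^ 2)
        + ((1 + μ) ^ 2 / (2 * μ ^ 2)) *
          (γ t * S t - y * s - (stieltjesInt S γp t - stieltjesInt S γm t)) ^ 2 := by

  intro t ht
  have hsp : 0 < s := hs ▸ hSpos 0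
  have hg : 0 ≤ tcost δ μ y s := by
    unfold tcost
    split
    · exact le_refl 0
    · exact le_trans hδ.le (le_max_left _ _)
  have hIp : 0 ≤ stieltjesInt S γp t :=
    setIntegral_nonneg measurableSet_Icc (fun u _ => (hSpos u).le)
  have hIm : 0 ≤ stieltjesInt S γm t :=
    setIntegral_nonneg measurableSet_Icc (fun u _ => (hSpos u).le)
  have h1 := hadm1 t ht
  have h2 := hadm2 t ht
  set X := γ t * S t with hX
  set Ip := stieltjesInt S γp t with hIpd
  set Im := stieltjesInt S γm t with hImd
  set c0 := z + tcost δ μ y s + |y| * s with hc0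
  set Q := X - y * s - (Ip - Im) with hQ
  clear_value X Ip Im c0 Q
  have hys : 0 ≤ |y| * s := mul_nonneg (abs_nonneg y) hsp.le
  have hXI : X - (Ip - Im) = y * s + Q := by rw [hQ]; ring
  have hys' : |y * s| = |y| * s := by rw [abs_mul, abs_of_pos hsp]
  have habsQ : |y * s + Q| ≤ |y| * s + |Q| := by
    calc |y * s + Q| ≤ |y * s| + |Q| := abs_add_le _ _
    _ = |y| * s + |Q| := by rw [hys']
  have hleQ : y * s + Q ≤ |y| * s + |Q| := le_trans (le_abs_self _) habsQ
  have hgeQ : -(|y| * s + |Q|) ≤ y * s + Q := by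
    have := neg_abs_le (y * s + Q)
    linarith
  have hQabs : 0 ≤ |Q| := abs_nonneg Q
  have habs : |2 * μ * X| ≤ c0 + (1 + μ) * (|y| * s + |Q|) := by
    rw [abs_le]
    constructor
    · -- lower bound from h1 and hIp
      nlinarith [hXI, hgeQ, hQabs, hys]
    · -- upper bound from h2 and hIm
      nlinarith [hXI, hleQ, hQabs, hys]
  set C := z + tcost δ μ y s + (2 + 3 * μ) * |y| * s with hC
  clear_value C
  have hCge : c0 + (1 + μ) * (|y| * s) ≤ C := by rw [hC, hc0]; nlinarith
  have hc0nn : 0 ≤ c0 := by rw [hc0]; linarith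
  have hC0 : 0 ≤ c0 + (1 + μ) * (|y| * s) := by nlinarith [hc0nn, hys, hμ.le]
  have hsq : (2 * μ * X) ^ 2 ≤ (c0 + (1 + μ) * (|y| * s + |Q|)) ^ 2 := by
    have h := pow_le_pow_left₀ (abs_nonneg _) habs 2
    rwa [sq_abs] at h
  have ha : (c0 + (1 + μ) * (|y| * s + |Q|)) ^ 2
      ≤ 2 * (c0 + (1 + μ) * (|y| * s)) ^ 2 + 2 * ((1 + μ) * |Q|) ^ 2 := by
    nlinarith [sq_nonneg (c0 + (1 + μ) * (|y| * s) - (1 + μ) * |Q|)]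
  have hb : (c0 + (1 + μ) * (|y| * s)) ^ 2 ≤ C ^ 2 := by
    exact pow_le_pow_left₀ hC0 hCge 2
  have key : 4 * μ ^ 2 * X ^ 2 ≤ 2 * C ^ 2 + 2 * (1 + μ) ^ 2 * |Q| ^ 2 := by
    nlinarith [hsq, ha, hb]
  rw [sq_abs] at key
  have hμ2 : (0:ℝ) < 2 * μ ^ 2 := by positivity
  have hrw : C ^ 2 / (2 * μ ^ 2) + ((1 + μ) ^ 2 / (2 * μ ^ 2)) * Q ^ 2
      = (C ^ 2 + (1 + μ) ^ 2 * Q ^ 2) / (2 * μ ^ 2) := by ring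
  rw [hrw, le_div_iff₀ hμ2]
  nlinarith [key]
end

section
/- Under the hypotheses of the pathwise growth bound, one also has the one-sided estimates: ∫_{[0,t]} S dγ⁻ ≤ (1/(2μ))·(z + g(y,s) + |y|s + (1+μ)(|y|s + ∫_0^t γ dS)) and ∫_{[0,t]} S dγ⁺ ≤ (1/(2μ))·(z + g(y,s) + |y|s + (1−μ)(|y|s + ∫_0^t γ dS)) for every t ∈ [0,T]. -/
open MeasureTheory

/-- One-sided estimates on the Stieltjes integrals against the positive and negative
variation of an admissible portfolio. Here `∫_0^t γ dS` is given by integration by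
parts as `γ(t)S(t) − ys − ∫_{[0,t]} S dγ`. -/
theorem portfolio_variation_bounds (T s z δ μ y : ℝ) (hT : 0 ≤ T) (hδ : 0 < δ)
    (hμ : 0 < μ) (hμ1 : μ < 1) (hz : 0 ≤ z)
    (S : ℝ → ℝ) (hScont : Continuous S) (hSpos : ∀ t, 0 < S t) (hs : S 0 = s)
    (γp γm : StieltjesFunction ℝ) (hγp0 : γp 0 = 0) (hγm0 : γm 0 = 0)
    (γ : ℝ → ℝ) (hγ : ∀ t, γ t = y + γp t - γm t)
    (hadm1 : ∀ t ∈ Set.Icc (0:ℝ) T,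
      0 ≤ z + tcost δ μ y s + |y| * s
        - (1 + μ) * (stieltjesInt S γp t - stieltjesInt S γm t)
        - 2 * μ * stieltjesInt S γm t + (1 + μ) * (γ t * S t))
    (hadm2 : ∀ t ∈ Set.Icc (0:ℝ) T,
      0 ≤ z + tcost δ μ y s + |y| * s
        - (1 - μ) * (stieltjesInt S γp t - stieltjesInt S γm t)
        - 2 * μ * stieltjesInt S γp t + (1 - μ) * (γ t * S t)) :
    ∀ t ∈ Set.Icc (0:ℝ) T,
      stieltjesInt S γm t ≤ (1 / (2 * μ)) * (z + tcost δ μ y s + |y| * s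
        + (1 + μ) * (|y| * s
          + (γ t * S t - y * s - (stieltjesInt S γp t - stieltjesInt S γm t)))) ∧
      stieltjesInt S γp t ≤ (1 / (2 * μ)) * (z + tcost δ μ y s + |y| * s
        + (1 - μ) * (|y| * s
          + (γ t * S t - y * s - (stieltjesInt S γp t - stieltjesInt S γm t)))) := by
  intro t ht
  have h1 := hadm1 t ht
  have h2 := hadm2 t ht
  have hs0 : 0 < s := hs ▸ hSpos 0
  have hy : y ≤ |y| := le_abs_self y
  have hys : 0 ≤ (|y| - y) * s := mul_nonneg (by linarith) hs0.le
  have hprod : 0 ≤ (1 + μ) * (|y| * s - y * s) := by nlinarith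
  have hprod2 : 0 ≤ (1 - μ) * (|y| * s - y * s) := by nlinarith
  have h2μ : 0 < 2 * μ := by linarith
  constructor
  · rw [div_mul_eq_mul_div, one_mul, le_div_iff₀ h2μ]
    nlinarith
  · rw [div_mul_eq_mul_div, one_mul, le_div_iff₀ h2μ]
    nlinarith
end
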